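/- arXiv:2007.07464 — 2 statements merged into one kernel-verified Lean document; each statement's English description precedes it below -/
import Mathlib

section
/- Every graph in the family H_k (k ≥ 3), obtained from G_k by pasting distinct cliques onto the heavy edges, is strongly chordal. -/
def Gk (k : ℕ) : SimpleGraph (Fin (3 * k + 1)) where
  Adj a b := a ≠ b ∧ (a.val < k ∨ b.val < k ∨ a.val + 1 = b.val ∨ b.val + 1 = a.val)
  symm := by constructor; rintro a b ⟨h1, h2⟩; exact ⟨h1.symm, by tauto⟩
  loopless := by constructor; rintro a ⟨h, _⟩; exact h rfl

def xv (k : ℕ) (i : Fin k) : Fin (3 * k + 1) := ⟨i.val, by have := i.isLt; omega⟩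
def uv (k : ℕ) (i : Fin k) : Fin (3 * k + 1) := ⟨k + i.val, by have := i.isLt; omega⟩
def zv (k : ℕ) : Fin (3 * k + 1) := ⟨2 * k, by omega⟩
def vv (k : ℕ) (i : Fin k) : Fin (3 * k + 1) := ⟨3 * k - i.val, by omega⟩

/-- Index type for the heavy edges of `G_k`: `inl i` is the edge `x_{i+1}u_{i+1}`,
`inr i` is the edge `x_{i+1}v_{i+1}` (`i + 1 ≤ k - 1`). -/
abbrev HeavyIdx (k : ℕ) := Fin k ⊕ Fin (k - 1)

/-- The endpoints of a heavy edge of `G_k`. -/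
def heavyEnds (k : ℕ) : HeavyIdx k → Fin (3 * k + 1) × Fin (3 * k + 1)
  | .inl i => (xv k i, uv k i)
  | .inr i => (xv k (i.castLE (Nat.sub_le k 1)), vv k (i.castLE (Nat.sub_le k 1)))

/-- The graph obtained from `G_k` by pasting a (distinct) clique onto each heavy
edge.  `W` is the set of new vertices; the new vertex `w` belongs to the clique
pasted onto the heavy edge `f w`.  Each new vertex is adjacent to the other new
vertices of its own clique and to the two ends of its heavy edge, and to nothing
else.  When `f` is surjective, every pasted clique has order at least 3. -/
def pastedGk (k : ℕ) {W : Type*} (f : W → HeavyIdx k) :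
    SimpleGraph (Fin (3 * k + 1) ⊕ W) where
  Adj a b :=
    match a, b with
    | .inl a, .inl b => (Gk k).Adj a b
    | .inl a, .inr w => a = (heavyEnds k (f w)).1 ∨ a = (heavyEnds k (f w)).2
    | .inr w, .inl a => a = (heavyEnds k (f w)).1 ∨ a = (heavyEnds k (f w)).2
    | .inr w, .inr w' => w ≠ w' ∧ f w = f w'
  symm := by
    constructor
    rintro (a | w) (b | w') h
    · exact (Gk k).adj_symm h
    · exact h
    · exact h
    · exact ⟨h.1.symm, h.2.symm⟩
  loopless := by
    constructor
    rintro (a | w) h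
    · exact (Gk k).irrefl h
    · exact h.1 rfl

/-- A graph is chordal if it has no induced cycle of length at least 4. -/
def IsChordal {V : Type*} (G : SimpleGraph V) : Prop :=
  ∀ n, 4 ≤ n → IsEmpty (SimpleGraph.cycleGraph n ↪g G)

/-- A graph is strongly chordal if it is chordal and every even cycle of length at
least 6 has a chord joining two vertices at odd distance from each other along the
cycle. -/
def IsStronglyChordal {V : Type*} (G : SimpleGraph V) : Prop :=
  IsChordal G ∧ ∀ (v : V) (c : G.Walk v v), c.IsCycle → 6 ≤ c.length → Even c.length →
    ∃ i j, i < j ∧ j < c.length ∧ Odd (j - i) ∧ j - i ≠ 1 ∧ ¬(i = 0 ∧ j = c.length - 1) ∧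
      G.Adj (c.getVert i) (c.getVert j)

namespace Stmt6Aux

open Sum SimpleGraph

variable {k : ℕ} {W : Type*} {f : W → HeavyIdx k}

lemma xval (k : ℕ) (e : HeavyIdx k) : ((heavyEnds k e).1).val < k := by
  cases e with
  | inl i => exact i.isLt
  | inr i => exact (i.castLE (Nat.sub_le k 1)).isLt

lemma pval (k : ℕ) (e : HeavyIdx k) : k ≤ ((heavyEnds k e).2).val := by
  cases e with
  | inl i => simp only [heavyEnds, uv]; omega
  | inr i =>
    have hi : i.val < k - 1 := i.isLt
    simp only [heavyEnds, vv, Fin.coe_castLE]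
    omega

lemma ends2_inj (k : ℕ) {e e' : HeavyIdx k}
    (h : (heavyEnds k e).2 = (heavyEnds k e').2) : e = e' := by
  have hv := congrArg Fin.val h
  cases e with
  | inl i =>
    cases e' with
    | inl i' =>
      simp only [heavyEnds, uv] at hv
      exact congrArg _ (Fin.ext (by omega))
    | inr i' =>
      have hi : i.val < k := i.isLt
      have hi' : i'.val < k - 1 := i'.isLt
      simp only [heavyEnds, uv, vv, Fin.coe_castLE] at hv
      omega
  | inr i =>
    cases e' with
    | inl i' =>
      have hi : i.val < k - 1 := i.isLt
      have hi' : i'.val < k := i'.isLt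
      simp only [heavyEnds, uv, vv, Fin.coe_castLE] at hv
      omega
    | inr i' =>
      have hi : i.val < k - 1 := i.isLt
      have hi' : i'.val < k - 1 := i'.isLt
      simp only [heavyEnds, vv, Fin.coe_castLE] at hv
      exact congrArg _ (Fin.ext (by omega))

lemma adj_x_of_ne {e : HeavyIdx k} {a : Fin (3 * k + 1)} (h : a ≠ (heavyEnds k e).1) :
    (pastedGk k f).Adj (inl a) (inl (heavyEnds k e).1) :=
  ⟨h, Or.inr (Or.inl (xval k e))⟩

lemma adj_xp (e : HeavyIdx k) :
    (pastedGk k f).Adj (inl (heavyEnds k e).1) (inl (heavyEnds k e).2) := by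
  refine ⟨fun hh => ?_, Or.inl (xval k e)⟩
  have := congrArg Fin.val hh
  have h1 := xval k e
  have h2 := pval k e
  omega

lemma adj_xw {e : HeavyIdx k} {w' : W} (h : f w' = e) :
    (pastedGk k f).Adj (inl (heavyEnds k e).1) (inr w') :=
  Or.inl (by rw [h])

lemma adj_pw {e : HeavyIdx k} {w' : W} (h : f w' = e) :
    (pastedGk k f).Adj (inl (heavyEnds k e).2) (inr w') :=
  Or.inr (by rw [h])

lemma adj_ww {w' w'' : W} (h : w' ≠ w'') (hf : f w' = f w'') :
    (pastedGk k f).Adj (inr w') (inr w'' : Fin (3 * k + 1) ⊕ W) :=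
  ⟨h, hf⟩

lemma nbhdW {y : Fin (3 * k + 1) ⊕ W} {w : W} (h : (pastedGk k f).Adj y (inr w)) :
    y = inl (heavyEnds k (f w)).1 ∨ y = inl (heavyEnds k (f w)).2 ∨
      ∃ w', y = inr w' ∧ w' ≠ w ∧ f w' = f w := by
  cases y with
  | inl a =>
    rcases h with h | h
    · exact Or.inl (congrArg _ h)
    · exact Or.inr (Or.inl (congrArg _ h))
  | inr w' => exact Or.inr (Or.inr ⟨w', rfl, h.1, h.2⟩)

lemma lemP {e : HeavyIdx k} {y : Fin (3 * k + 1) ⊕ W}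
    (hy : (pastedGk k f).Adj y (inl (heavyEnds k e).2))
    (hne : y ≠ inl (heavyEnds k e).1) :
    (pastedGk k f).Adj y (inl (heavyEnds k e).1) := by
  cases y with
  | inl a => exact adj_x_of_ne (fun h => hne (congrArg _ h))
  | inr w' =>
    rcases hy with h | h
    · have hv := congrArg Fin.val h
      have h1 := xval k (f w')
      have h2 := pval k e
      omega
    · have : f w' = e := ends2_inj k h.symm
      exact (adj_xw this).symm

lemma lemP' {w₀ : W} {y : Fin (3 * k + 1) ⊕ W}
    (hy : (pastedGk k f).Adj y (inr w₀))
    (hne : y ≠ inl (heavyEnds k (f w₀)).1) :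
    (pastedGk k f).Adj y (inl (heavyEnds k (f w₀)).1) := by
  rcases nbhdW hy with h | h | ⟨w', rfl, hw, hfw⟩
  · exact absurd h hne
  · rw [h]; exact (adj_xp (f w₀)).symm
  · exact (adj_xw hfw).symm

lemma cliqueN {w : W} {y1 y2 : Fin (3 * k + 1) ⊕ W}
    (h1 : (pastedGk k f).Adj y1 (inr w)) (h2 : (pastedGk k f).Adj y2 (inr w))
    (hne : y1 ≠ y2) : (pastedGk k f).Adj y1 y2 := by
  rcases nbhdW h1 with rfl | rfl | ⟨w1, rfl, hw1, hf1⟩ <;>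
    rcases nbhdW h2 with rfl | rfl | ⟨w2, rfl, hw2, hf2⟩
  · exact absurd rfl hne
  · exact adj_xp (f w)
  · exact adj_xw hf2
  · exact (adj_xp (f w)).symm
  · exact absurd rfl hne
  · exact adj_pw hf2
  · exact (adj_xw hf1).symm
  · exact (adj_pw hf1).symm
  · exact adj_ww (fun h => hne (congrArg _ h)) (hf1.trans hf2.symm)

/-- a cyclic sequence all of whose vertices are path vertices is impossible -/
lemma no_all_path {n : ℕ} (hn : 3 ≤ n) (c : ℕ → Fin (3 * k + 1) ⊕ W)
    (hadj : ∀ i, (pastedGk k f).Adj (c i) (c (i + 1)))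
    (hper : ∀ i, c (i + n) = c i)
    (hne : ∀ i d, 0 < d → d < n → c i ≠ c (i + d))
    (hpath : ∀ i, ∃ a, c i = inl a ∧ k ≤ a.val) : False := by
  classical
  set g : ℕ → ℕ := fun i => Sum.elim Fin.val (fun _ => 0) (c i) with hg
  have hgper : ∀ q r, g (r + n * q) = g r := by
    intro q
    induction q with
    | zero => intro r; simp
    | succ q ih =>
      intro r
      have : r + n * (q + 1) = (r + n * q) + n := by ring
      rw [this, hg]
      simp only
      rw [hper (r + n * q)]
      exact ih r
  have hmod : ∀ i, g i = g (i % n) := by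
    intro i
    conv_lhs => rw [show i = i % n + n * (i / n) from (Nat.mod_add_div i n).symm]
    exact hgper (i / n) (i % n)
  obtain ⟨m, hm, hmax⟩ := Finset.exists_max_image (Finset.range n) g
    ⟨0, Finset.mem_range.mpr (by omega)⟩
  have hle : ∀ i, g i ≤ g m := by
    intro i
    rw [hmod i]
    exact hmax _ (Finset.mem_range.mpr (Nat.mod_lt _ (by omega)))
  obtain ⟨am, ham, hamk⟩ := hpath m
  obtain ⟨b1, hb1, hb1k⟩ := hpath (m + 1)
  obtain ⟨b2, hb2, hb2k⟩ := hpath (m + n - 1)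
  have hA1 : (pastedGk k f).Adj (inl am) (inl b1) := by
    have := hadj m; rwa [ham, hb1] at this
  have hA2 : (pastedGk k f).Adj (inl b2) (inl am) := by
    have := hadj (m + n - 1)
    rwa [show m + n - 1 + 1 = m + n by omega, hper m, hb2, ham] at this
  have hgm : g m = am.val := by rw [hg]; simp [ham]
  have hgb1 : g (m + 1) = b1.val := by rw [hg]; simp [hb1]
  have hgb2 : g (m + n - 1) = b2.val := by rw [hg]; simp [hb2]
  have hle1 : b1.val ≤ am.val := by rw [← hgb1, ← hgm]; exact hle _
  have hle2 : b2.val ≤ am.val := by rw [← hgb2, ← hgm]; exact hle _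
  obtain ⟨hne1, hcase1⟩ := hA1
  obtain ⟨hne2, hcase2⟩ := hA2
  have hb1e : b1.val + 1 = am.val := by
    rcases hcase1 with h | h | h | h <;> omega
  have hb2e : b2.val + 1 = am.val := by
    rcases hcase2 with h | h | h | h <;> omega
  have : b1 = b2 := Fin.ext (by omega)
  have hceq : c (m + 1) = c (m + n - 1) := by rw [hb1, hb2, this]
  exact hne (m + 1) (n - 2) (by omega) (by omega)
    (by rwa [show m + 1 + (n - 2) = m + n - 1 by omega])

/-- the master lemma: every cyclic sequence has a chord at circular distance 3 -/
lemma master {n : ℕ} (hn : 4 ≤ n) (c : ℕ → Fin (3 * k + 1) ⊕ W)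
    (hadj : ∀ i, (pastedGk k f).Adj (c i) (c (i + 1)))
    (hper : ∀ i, c (i + n) = c i)
    (hne : ∀ i d, 0 < d → d < n → c i ≠ c (i + d)) :
    ∃ i, (pastedGk k f).Adj (c i) (c (i + 3)) := by
  by_contra hno
  push_neg at hno
  -- Step 1: no pasted vertices occur
  have hW : ∀ j w, c j ≠ inr w := by
    intro j w hj
    have haw : (pastedGk k f).Adj (c (j + n - 1)) (inr w) := by
      have := hadj (j + n - 1)
      rwa [show j + n - 1 + 1 = j + n by omega, hper j, hj] at this
    have hwb : (pastedGk k f).Adj (c (j + 1)) (inr w) := by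
      have := (hadj j).symm; rwa [hj] at this
    have ha'a : (pastedGk k f).Adj (c (j + n - 2)) (c (j + n - 1)) := by
      have := hadj (j + n - 2)
      rwa [show j + n - 2 + 1 = j + n - 1 by omega] at this
    have hbb' : (pastedGk k f).Adj (c (j + 1)) (c (j + 2)) := by
      have := hadj (j + 1)
      rwa [show j + 1 + 1 = j + 2 by omega] at this
    have h1 : ¬ (pastedGk k f).Adj (c (j + n - 2)) (c (j + 1)) := by
      have := hno (j + n - 2)
      rwa [show j + n - 2 + 3 = (j + 1) + n by omega, hper (j + 1)] at this
    have h2 : ¬ (pastedGk k f).Adj (c (j + n - 1)) (c (j + 2)) := by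
      have := hno (j + n - 1)
      rwa [show j + n - 1 + 3 = (j + 2) + n by omega, hper (j + 2)] at this
    have hab : c (j + n - 1) ≠ c (j + 1) := by
      have := hne (j + n - 1) 2 (by omega) (by omega)
      rwa [show j + n - 1 + 2 = (j + 1) + n by omega, hper (j + 1)] at this
    have ha'b : c (j + n - 2) ≠ c (j + 1) := by
      have := hne (j + n - 2) 3 (by omega) (by omega)
      rwa [show j + n - 2 + 3 = (j + 1) + n by omega, hper (j + 1)] at this
    have hab' : c (j + n - 1) ≠ c (j + 2) := by
      have := hne (j + n - 1) 3 (by omega) (by omega)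
      rwa [show j + n - 1 + 3 = (j + 2) + n by omega, hper (j + 2)] at this
    have hbb'ne : c (j + 1) ≠ c (j + 2) := by
      have := hne (j + 1) 1 (by omega) (by omega)
      rwa [show j + 1 + 1 = j + 2 by omega] at this
    rcases nbhdW haw with hax | hap | ⟨w2, ha2, hw2ne, hw2f⟩ <;>
      rcases nbhdW hwb with hbx | hbp | ⟨w4, hb4, hw4ne, hw4f⟩
    -- a = x, b = x
    · exact hab (hax.trans hbx.symm)
    -- a = x, b = p
    · have hb' : (pastedGk k f).Adj (c (j + 2)) (inl (heavyEnds k (f w)).2) := by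
        have := hbb'.symm; rwa [hbp] at this
      have : (pastedGk k f).Adj (c (j + 2)) (inl (heavyEnds k (f w)).1) :=
        lemP hb' (by rw [← hax]; exact fun h => hab' h.symm)
      exact h2 (by rw [hax]; exact this.symm)
    -- a = x, b = w4
    · have hb' : (pastedGk k f).Adj (c (j + 2)) (inr w4) := by
        have := hbb'.symm; rwa [hb4] at this
      have : (pastedGk k f).Adj (c (j + 2)) (inl (heavyEnds k (f w4)).1) :=
        lemP' hb' (by rw [hw4f, ← hax]; exact fun h => hab' h.symm)
      rw [hw4f] at this
      exact h2 (by rw [hax]; exact this.symm)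
    -- a = p, b = x
    · have ha' : (pastedGk k f).Adj (c (j + n - 2)) (inl (heavyEnds k (f w)).2) := by
        have := ha'a; rwa [hap] at this
      have : (pastedGk k f).Adj (c (j + n - 2)) (inl (heavyEnds k (f w)).1) :=
        lemP ha' (by rw [← hbx]; exact ha'b)
      exact h1 (by rw [hbx]; exact this)
    -- a = p, b = p
    · exact hab (hap.trans hbp.symm)
    -- a = p, b = w4
    · have hb' : (pastedGk k f).Adj (c (j + 2)) (inr w4) := hb4 ▸ hbb'.symm
      rcases nbhdW hb' with h | h | ⟨w5, h5, hw5ne, hf5⟩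
      · rw [hw4f] at h
        exact h2 (by rw [hap, h]; exact (adj_xp (f w)).symm)
      · rw [hw4f] at h
        exact hab' (hap.trans (h.symm))
      · rw [hw4f] at hf5
        exact h2 (by rw [hap, h5]; exact adj_pw hf5)
    -- a = w2, b = x
    · have ha' : (pastedGk k f).Adj (c (j + n - 2)) (inr w2) := ha2 ▸ ha'a
      have : (pastedGk k f).Adj (c (j + n - 2)) (inl (heavyEnds k (f w2)).1) :=
        lemP' ha' (by rw [hw2f, ← hbx]; exact ha'b)
      rw [hw2f] at this
      exact h1 (by rw [hbx]; exact this)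
    -- a = w2, b = p
    · have ha' : (pastedGk k f).Adj (c (j + n - 2)) (inr w2) := ha2 ▸ ha'a
      rcases nbhdW ha' with h | h | ⟨w5, h5, hw5ne, hf5⟩
      · rw [hw2f] at h
        exact h1 (by rw [hbp, h]; exact adj_xp (f w))
      · rw [hw2f] at h
        exact ha'b (by rw [hbp, h])
      · rw [hw2f] at hf5
        exact h1 (by rw [hbp, h5]; exact (adj_pw hf5).symm)
    -- a = w2, b = w4
    · have hb' : (pastedGk k f).Adj (c (j + 2)) (inr w4) := hb4 ▸ hbb'.symm
      rcases nbhdW hb' with h | h | ⟨w5, h5, hw5ne, hf5⟩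
      · rw [hw4f] at h
        exact h2 (by rw [ha2, h]; exact (adj_xw hw2f).symm)
      · rw [hw4f] at h
        exact h2 (by rw [ha2, h]; exact (adj_pw hw2f).symm)
      · rw [hw4f] at hf5
        have hwne : w2 ≠ w5 := fun hh => hab' (by rw [ha2, h5, hh])
        exact h2 (by rw [ha2, h5]; exact adj_ww hwne (hw2f.trans hf5.symm))
  have hL : ∀ i, ∃ a, c i = inl a := by
    intro i
    cases hci : c i with
    | inl a => exact ⟨a, rfl⟩
    | inr w => exact absurd hci (hW i w)
  -- Step 2: no x vertices
  by_cases hX : ∃ i a, c i = inl a ∧ a.val < k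
  · obtain ⟨i, a, hia, hak⟩ := hX
    obtain ⟨b, hib⟩ := hL (i + 3)
    refine absurd ?_ (hno i)
    rw [hia, hib]
    refine ⟨fun h => ?_, Or.inl hak⟩
    · exact hne i 3 (by omega) (by omega) (by rw [hia, hib, h])
  · push_neg at hX
    exact no_all_path (by omega) c hadj hper hne
      (fun i => by
        obtain ⟨a, ha⟩ := hL i
        exact ⟨a, ha, hX i a ha⟩)

lemma support_getElem? {V : Type*} {G : SimpleGraph V} {u v : V} (p : G.Walk u v) :
    ∀ i, i ≤ p.length → p.support[i]? = some (p.getVert i) := by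
  induction p with
  | nil =>
    intro i hi
    have h0 : i = 0 := by simpa using hi
    subst h0
    simp [SimpleGraph.Walk.support_nil]
  | cons h q ih =>
    intro i hi
    cases i with
    | zero => simp [SimpleGraph.Walk.support_cons, SimpleGraph.Walk.getVert_zero]
    | succ i =>
      rw [SimpleGraph.Walk.support_cons, SimpleGraph.Walk.getVert_cons_succ,
        List.getElem?_cons_succ]
      exact ih i (by simpa [SimpleGraph.Walk.length_cons] using hi)

lemma cycle_getVert_inj {V : Type*} {G : SimpleGraph V} {u : V} {p : G.Walk u u}
    (hp : p.IsCycle) : ∀ i j, i < p.length → j < p.length →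
      p.getVert i = p.getVert j → i = j := by
  have hnd := hp.support_nodup
  have htl : p.support.tail.length = p.length := by
    simp [List.length_tail, SimpleGraph.Walk.length_support]
  have htail : ∀ i, i < p.length → p.support.tail[i]? = some (p.getVert (i + 1)) := by
    intro i hi
    have := support_getElem? p (i + 1) (by omega)
    rw [p.support_eq_cons] at this
    simpa using this
  -- injectivity on [1, length]
  have key : ∀ i j, i < p.length → j < p.length →
      p.getVert (i + 1) = p.getVert (j + 1) → i = j := by
    intro i j hi hj heq
    have h1 := htail i hi
    have h2 := htail j hj
    rw [heq] at h1
    have hi' : i < p.support.tail.length := by omega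
    have hj' : j < p.support.tail.length := by omega
    rw [List.getElem?_eq_getElem hi'] at h1
    rw [List.getElem?_eq_getElem hj'] at h2
    have : p.support.tail[i] = p.support.tail[j] := by
      rw [Option.some_inj] at h1 h2
      rw [h1, h2]
    have hinj := List.nodup_iff_injective_get.mp hnd
    have := hinj (a₁ := ⟨i, hi'⟩) (a₂ := ⟨j, hj'⟩) (by simpa using this)
    simpa using congrArg Fin.val this
  intro i j hi hj heq
  have h3 := hp.three_le_length
  rcases Nat.eq_zero_or_pos i with rfl | hi0 <;> rcases Nat.eq_zero_or_pos j with rfl | hj0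
  · rfl
  · -- getVert 0 = u = getVert length
    exfalso
    have h0 : p.getVert 0 = p.getVert p.length := by
      rw [p.getVert_zero, p.getVert_length]
    have := key (j - 1) (p.length - 1) (by omega) (by omega)
      (by rw [show j - 1 + 1 = j by omega, show p.length - 1 + 1 = p.length by omega,
        ← heq, h0])
    omega
  · exfalso
    have h0 : p.getVert 0 = p.getVert p.length := by
      rw [p.getVert_zero, p.getVert_length]
    have := key (i - 1) (p.length - 1) (by omega) (by omega)
      (by rw [show i - 1 + 1 = i by omega, show p.length - 1 + 1 = p.length by omega,
        heq, h0])
    omega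
  · have := key (i - 1) (j - 1) (by omega) (by omega)
      (by rw [show i - 1 + 1 = i by omega, show j - 1 + 1 = j by omega, heq])
    omega

lemma chordal_pasted (k : ℕ) {W : Type*} (f : W → HeavyIdx k) :
    IsChordal (pastedGk k f) := by
  intro n hn
  constructor
  intro φ
  have hn0 : 0 < n := by omega
  set c : ℕ → Fin (3 * k + 1) ⊕ W := fun i => φ ⟨i % n, Nat.mod_lt _ hn0⟩ with hc
  have cyc_adj_shift : ∀ (u v : Fin n) (d : ℕ), 0 < d → d < n →
      v.val = (u.val + d) % n →
      ((SimpleGraph.cycleGraph n).Adj u v ↔ (d = 1 ∨ d = n - 1)) := by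
    intro u v d h0 hdn hv
    have hs1 : (u - v).val = (n - v.val + u.val) % n := by rw [Fin.sub_def]
    have hs2 : (v - u).val = (n - u.val + v.val) % n := by rw [Fin.sub_def]
    have hu := u.isLt
    rw [SimpleGraph.cycleGraph_adj', hs1, hs2, hv]
    rcases Nat.lt_or_ge (u.val + d) n with hc | hc
    · rw [Nat.mod_eq_of_lt hc,
        show n - (u.val + d) + u.val = n - d by omega,
        show n - u.val + (u.val + d) = n + d by omega,
        Nat.mod_eq_of_lt (show n - d < n by omega),
        Nat.add_mod_left, Nat.mod_eq_of_lt hdn]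
      omega
    · have hm : (u.val + d) % n = u.val + d - n := by
        rw [Nat.mod_eq_sub_mod hc, Nat.mod_eq_of_lt (by omega)]
      rw [hm, show n - (u.val + d - n) + u.val = n + (n - d) by omega,
        show n - u.val + (u.val + d - n) = d by omega,
        Nat.add_mod_left, Nat.mod_eq_of_lt (show n - d < n by omega),
        Nat.mod_eq_of_lt hdn]
      omega
  have hper : ∀ i, c (i + n) = c i := by
    intro i
    simp only [hc, Nat.add_mod_right]
  have hne : ∀ i d, 0 < d → d < n → c i ≠ c (i + d) := by
    intro i d h0 hd heq
    have := φ.injective heq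
    have hv : i % n = (i + d) % n := congrArg Fin.val this
    have : n ∣ d := by
      have : i ≡ i + d [MOD n] := hv
      have := (Nat.modEq_iff_dvd' (by omega)).mp this
      simpa using this
    have := Nat.le_of_dvd h0 this
    omega
  have hadj : ∀ i, (pastedGk k f).Adj (c i) (c (i + 1)) := by
    intro i
    show (pastedGk k f).Adj (φ ⟨i % n, Nat.mod_lt _ hn0⟩) (φ ⟨(i + 1) % n, Nat.mod_lt _ hn0⟩)
    rw [SimpleGraph.Embedding.map_adj_iff]
    refine (cyc_adj_shift ⟨i % n, Nat.mod_lt _ hn0⟩ ⟨(i + 1) % n, Nat.mod_lt _ hn0⟩ 1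
      (by omega) (by omega) ?_).mpr (Or.inl rfl)
    show (i + 1) % n = (i % n + 1) % n
    rw [Nat.add_mod i 1 n, Nat.mod_eq_of_lt (show (1:ℕ) < n by omega)]
  have hno2 : ∀ i, ¬ (pastedGk k f).Adj (c i) (c (i + 2)) := by
    intro i hA
    have hA' : (pastedGk k f).Adj (φ ⟨i % n, Nat.mod_lt _ hn0⟩)
        (φ ⟨(i + 2) % n, Nat.mod_lt _ hn0⟩) := hA
    rw [SimpleGraph.Embedding.map_adj_iff] at hA'
    have := (cyc_adj_shift ⟨i % n, Nat.mod_lt _ hn0⟩ ⟨(i + 2) % n, Nat.mod_lt _ hn0⟩ 2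
      (by omega) (by omega) (by
        show (i + 2) % n = (i % n + 2) % n
        rw [Nat.add_mod i 2 n, Nat.mod_eq_of_lt (show (2:ℕ) < n by omega)])).mp hA'
    omega
  -- no pasted vertices
  have hW : ∀ j w, c j ≠ inr w := by
    intro j w hj
    have h1 : (pastedGk k f).Adj (c (j + n - 1)) (inr w) := by
      have := hadj (j + n - 1)
      rwa [show j + n - 1 + 1 = j + n by omega, hper j, hj] at this
    have h2 : (pastedGk k f).Adj (c (j + 1)) (inr w) := by
      have := (hadj j).symm
      rwa [hj] at this
    have hne12 : c (j + n - 1) ≠ c (j + 1) := by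
      have := hne (j + n - 1) 2 (by omega) (by omega)
      rwa [show j + n - 1 + 2 = (j + 1) + n by omega, hper (j + 1)] at this
    have := cliqueN h1 h2 hne12
    have hcon := hno2 (j + n - 1)
    rw [show j + n - 1 + 2 = (j + 1) + n by omega, hper (j + 1)] at hcon
    exact hcon this
  have hL : ∀ i, ∃ a, c i = inl a := by
    intro i
    cases hci : c i with
    | inl a => exact ⟨a, rfl⟩
    | inr w => exact absurd hci (hW i w)
  -- no x vertices
  have hX : ∀ i a, c i = inl a → ¬ a.val < k := by
    intro i a hia hak
    obtain ⟨b, hib⟩ := hL (i + 2)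
    refine hno2 i ?_
    rw [hia, hib]
    exact ⟨fun h => hne i 2 (by omega) (by omega) (by rw [hia, hib, h]),
      Or.inl hak⟩
  exact no_all_path (by omega) c hadj hper hne
    (fun i => by
      obtain ⟨a, ha⟩ := hL i
      exact ⟨a, ha, le_of_not_gt (hX i a ha)⟩)

end Stmt6Aux

/-- stmt6: every graph obtained from `G_k` by pasting distinct cliques onto the
heavy edges is strongly chordal. -/
theorem stmt6 (k : ℕ) (hk : 3 ≤ k) {W : Type*} (f : W → HeavyIdx k)
    (hf : Function.Surjective f) : IsStronglyChordal (pastedGk k f) := by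
  open Stmt6Aux Sum in
  constructor
  · exact chordal_pasted k f
  · intro v c hc hlen heven
    set n := c.length with hn
    have hn0 : 0 < n := by omega
    set cc : ℕ → Fin (3 * k + 1) ⊕ W := fun i => c.getVert (i % n) with hcc
    have hper : ∀ i, cc (i + n) = cc i := by
      intro i; simp only [hcc, Nat.add_mod_right]
    have hadj : ∀ i, (pastedGk k f).Adj (cc i) (cc (i + 1)) := by
      intro i
      have hr : i % n < n := Nat.mod_lt _ hn0
      have hmod : (i + 1) % n = (i % n + 1) % n := by
        rw [Nat.add_mod i 1 n, Nat.mod_eq_of_lt (show (1:ℕ) < n by omega)]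
      show (pastedGk k f).Adj (c.getVert (i % n)) (c.getVert ((i + 1) % n))
      by_cases hcase : i % n + 1 < n
      · rw [hmod, Nat.mod_eq_of_lt hcase]
        exact c.adj_getVert_succ hr
      · have hl : i % n = n - 1 := by omega
        have h0 : (i + 1) % n = 0 := by
          rw [hmod, hl, show n - 1 + 1 = n by omega, Nat.mod_self]
        rw [h0, hl, c.getVert_zero]
        have h2 := c.adj_getVert_succ (show n - 1 < c.length by omega)
        rw [show n - 1 + 1 = n by omega] at h2
        have h3 : c.getVert n = v := by rw [hn]; exact c.getVert_length
        rwa [h3] at h2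
    have hne : ∀ i d, 0 < d → d < n → cc i ≠ cc (i + d) := by
      intro i d h0 hd heq
      have heq' : c.getVert (i % n) = c.getVert ((i + d) % n) := heq
      have := Stmt6Aux.cycle_getVert_inj hc (i % n) ((i + d) % n)
        (Nat.mod_lt _ hn0) (Nat.mod_lt _ hn0) heq'
      have hdvd : n ∣ d := by
        have h : i ≡ i + d [MOD n] := this
        have := (Nat.modEq_iff_dvd' (by omega)).mp h
        simpa using this
      have := Nat.le_of_dvd h0 hdvd
      omega
    obtain ⟨i, hi⟩ := Stmt6Aux.master (by omega) cc hadj hper hne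
    have hi' : (pastedGk k f).Adj (c.getVert (i % n)) (c.getVert ((i + 3) % n)) := hi
    set a := i % n with ha
    have haa : a < n := Nat.mod_lt _ hn0
    have hb : (i + 3) % n = (a + 3) % n := by
      rw [Nat.add_mod i 3 n, Nat.mod_eq_of_lt (show (3:ℕ) < n by omega)]
    by_cases hcase : a + 3 < n
    · refine ⟨a, a + 3, by omega, hcase, ?_, by omega, ?_, ?_⟩
      · rw [Nat.add_sub_cancel_left]
        exact ⟨1, by norm_num⟩
      · rintro ⟨h0, h3⟩; omega
      · rw [hb, Nat.mod_eq_of_lt hcase] at hi'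
        exact hi'
    · have hbval : (a + 3) % n = a + 3 - n := by
        rw [Nat.mod_eq_sub_mod (by omega)]
        exact Nat.mod_eq_of_lt (by omega)
      obtain ⟨m, hm⟩ := heven
      refine ⟨a + 3 - n, a, by omega, haa, ⟨m - 2, by omega⟩, by omega, ?_, ?_⟩
      · rintro ⟨h1, h2⟩; omega
      · rw [hb, hbval] at hi'
        exact hi'.symm
end

section
/- The graph G_k = K_k ∨ P_{2k+1} is the intersection graph of a family of subtrees of a tree T, where T is a path p_1 p_2 ⋯ p_{2k} with a pendant leaf q_i attached to each p_i except p_{k+1}; consequently T has 2k−1 leaves and 2k−3 branch vertices (vertices of degree at least 3). -/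
/-- Vertices of the decomposition tree `T`: `inl j` is the path vertex `p_{j+1}`
(for `1 ≤ j+1 ≤ 2k`), and `inr q` is the pendant leaf `q_{j+1}` attached to
`p_{j+1}`, which exists for every `j+1 ≠ k+1`. -/
abbrev TreeVert (k : ℕ) := Fin (2 * k) ⊕ {j : Fin (2 * k) // j.val ≠ k}

/-- The decomposition tree `T` : a path `p_1 ⋯ p_{2k}` with a pendant leaf `q_i`
at each `p_i` except `p_{k+1}`. -/
def Tk (k : ℕ) : SimpleGraph (TreeVert k) where
  Adj a b :=
    match a, b with
    | .inl i, .inl j => i.val + 1 = j.val ∨ j.val + 1 = i.val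
    | .inl i, .inr q => q.1 = i
    | .inr q, .inl i => q.1 = i
    | .inr _, .inr _ => False
  symm := by constructor; rintro (i | q) (j | r) h <;> simp_all <;> tauto
  loopless := by constructor; rintro (i | q) h <;> simp_all

/-- The subtree of `T` assigned to each vertex of `G_k` (a vertex as a set of tree
vertices).  For a clique vertex `x_{a+1}` (`a < k`) the subtree is all of the path
`P` together with `q_{a+1}` and `q_{2k-a}` (paper indexing); a path vertex of `G_k`
at position `t = a - k` along `u_1,...,u_k,z,v_k,...,v_1` gets the one or two path
vertices `p` with index `t-1` or `t` together with its pendant leaf, if any. -/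
def Fsub (k : ℕ) (a : Fin (3 * k + 1)) : Set (TreeVert k) :=
  {w | match w with
    | .inl p => k ≤ a.val → (p.val = a.val - k - 1 ∨ p.val = a.val - k)
    | .inr q =>
        if a.val < k then q.1.val = a.val ∨ q.1.val = 2 * k - 1 - a.val
        else (a.val - k ≤ k - 1 ∧ q.1.val = a.val - k) ∨
          (k + 2 ≤ a.val - k ∧ q.1.val = a.val - k - 1)}

lemma walk_closed {V} {G : SimpleGraph V} (S : Set V) (hS : ∀ x y, G.Adj x y → x ∈ S → y ∈ S) :
    ∀ {v w}, G.Walk v w → v ∈ S → w ∈ S := by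
  intro v w p
  induction p with
  | nil => exact id
  | cons h p ih => exact fun hv => ih (hS _ _ h hv)

lemma not_reach {V} {G : SimpleGraph V} (S : Set V) (hS : ∀ x y, G.Adj x y → x ∈ S → y ∈ S)
    {v w} (hv : v ∈ S) (hw : w ∉ S) : ¬ G.Reachable v w :=
  fun hr => hw (hr.elim fun p => walk_closed S hS p hv)

lemma tk_bridge_pp (k : ℕ) (i j : Fin (2*k)) (hij : i.val + 1 = j.val) :
    ¬((Tk k) \ SimpleGraph.fromEdgeSet {s(Sum.inl i, Sum.inl j)}).Reachable (.inl i) (.inl j) := by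
  apply not_reach {x | Sum.elim (fun p => p.val) (fun q => q.1.val) x ≤ i.val}
  · rintro (p | q) (p' | q') ⟨hadj, hne⟩ hx
    · replace hadj : p.val + 1 = p'.val ∨ p'.val + 1 = p.val := hadj
      simp only [SimpleGraph.fromEdgeSet_adj, Set.mem_singleton_iff, Sym2.eq_iff, Sum.inl.injEq,
        ne_eq, not_and, not_not] at hne
      simp only [Set.mem_setOf_eq, Sum.elim_inl] at hx ⊢
      rcases hadj with h | h
      · rcases eq_or_ne p i with rfl | hpi
        · exfalso
          have : p' = j := by apply Fin.ext; omega
          have := hne (Or.inl ⟨rfl, this⟩)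
          apply_fun Fin.val at this; omega
        · have : p.val ≠ i.val := fun hh => hpi (Fin.ext hh)
          omega
      · omega
    · replace hadj : q'.1 = p := hadj
      simp only [Set.mem_setOf_eq, Sum.elim_inl, Sum.elim_inr] at hx ⊢
      rw [hadj]; exact hx
    · replace hadj : q.1 = p' := hadj
      simp only [Set.mem_setOf_eq, Sum.elim_inl, Sum.elim_inr] at hx ⊢
      rw [← hadj]; exact hx
    · exact (hadj : False).elim
  · simp only [Set.mem_setOf_eq, Sum.elim_inl]; exact le_refl _
  · simp only [Set.mem_setOf_eq, Sum.elim_inl]; omega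

lemma tk_bridge_pq (k : ℕ) (q : {j : Fin (2 * k) // j.val ≠ k}) :
    ¬((Tk k) \ SimpleGraph.fromEdgeSet {s(Sum.inl q.1, Sum.inr q)}).Reachable (.inr q) (.inl q.1) := by
  apply not_reach {x | x = Sum.inr q}
  · rintro (p | r) (p' | r') ⟨hadj, hne⟩ hx
    · simp at hx
    · simp at hx
    · simp only [Set.mem_setOf_eq, Sum.inr.injEq] at hx
      subst hx
      replace hadj : r.1 = p' := hadj
      subst hadj
      exfalso
      apply hne
      rw [SimpleGraph.fromEdgeSet_adj]
      exact ⟨by rw [Set.mem_singleton_iff]; exact Sym2.eq_swap, by simp⟩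
    · exact (hadj : False).elim
  · rfl
  · simp

lemma tk_connected (k : ℕ) (hk : 1 ≤ k) : (Tk k).Connected := by
  have hreach : ∀ n (hn : n < 2*k), (Tk k).Reachable (.inl ⟨0, by omega⟩) (.inl ⟨n, hn⟩) := by
    intro n
    induction n with
    | zero => intro hn; exact SimpleGraph.Reachable.refl _
    | succ m ih =>
      intro hn
      exact (ih (by omega)).trans (SimpleGraph.Adj.reachable (Or.inl rfl))
  have key : ∀ x : TreeVert k, (Tk k).Reachable x (.inl ⟨0, by omega⟩) := by
    rintro (p | q)
    · exact (hreach p.val p.isLt).symm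
    · exact (SimpleGraph.Adj.reachable (show q.1 = q.1 from rfl)).trans ((hreach q.1.val q.1.isLt).symm)
  have : Nonempty (TreeVert k) := ⟨.inl ⟨0, by omega⟩⟩
  exact ⟨fun x y => (key x).trans (key y).symm⟩

lemma tk_isTree (k : ℕ) (hk : 1 ≤ k) : (Tk k).IsTree := by
  constructor
  · exact tk_connected k hk
  · rw [SimpleGraph.isAcyclic_iff_forall_adj_isBridge]
    rintro (i | q) (j | r) hadj
    · rcases (hadj : i.val + 1 = j.val ∨ j.val + 1 = i.val) with h | h
      · rw [SimpleGraph.isBridge_iff]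
        exact tk_bridge_pp k i j h
      · rw [Sym2.eq_swap, SimpleGraph.isBridge_iff]
        exact tk_bridge_pp k j i h
    · replace hadj : r.1 = i := hadj
      subst hadj
      rw [SimpleGraph.isBridge_iff]
      exact fun h => tk_bridge_pq k r h.symm
    · replace hadj : q.1 = j := hadj
      subst hadj
      rw [Sym2.eq_swap, SimpleGraph.isBridge_iff]
      exact fun h => tk_bridge_pq k q h.symm
    · exact (hadj : False).elim

lemma tk_nbhd_inr (k : ℕ) (q : {j : Fin (2 * k) // j.val ≠ k}) :
    (Tk k).neighborSet (.inr q) = {Sum.inl q.1} := by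
  ext w
  cases w with
  | inl i =>
    rw [SimpleGraph.mem_neighborSet, Set.mem_singleton_iff]
    constructor
    · intro h
      exact congrArg Sum.inl (show q.1 = i from h).symm
    · intro h
      exact show q.1 = i from (Sum.inl_injective h).symm
  | inr r =>
    rw [SimpleGraph.mem_neighborSet, Set.mem_singleton_iff]
    exact ⟨fun h => (h : False).elim, fun h => by simp at h⟩

lemma tk_leaf_inr (k : ℕ) (q : {j : Fin (2 * k) // j.val ≠ k}) :
    ((Tk k).neighborSet (.inr q)).ncard = 1 := by
  rw [tk_nbhd_inr]; exact Set.ncard_singleton _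

lemma tk_two_le_inl (k : ℕ) (hk : 3 ≤ k) (i : Fin (2*k)) :
    2 ≤ ((Tk k).neighborSet (.inl i)).ncard := by
  have hb : ∀ a b : TreeVert k, a ≠ b → a ∈ (Tk k).neighborSet (.inl i) →
      b ∈ (Tk k).neighborSet (.inl i) → 2 ≤ ((Tk k).neighborSet (.inl i)).ncard := by
    intro a b hne ha hb
    calc 2 = ({a, b} : Set (TreeVert k)).ncard := (Set.ncard_pair hne).symm
    _ ≤ _ := Set.ncard_le_ncard (by rintro x (rfl | rfl) <;> assumption) (Set.toFinite _)
  have hi := i.isLt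
  rcases Nat.eq_zero_or_pos i.val with h0 | h0
  · exact hb (.inl ⟨1, by omega⟩) (.inr ⟨⟨0, by omega⟩, show (0:ℕ) ≠ k by omega⟩) (by simp)
      (show i.val + 1 = 1 ∨ 1 + 1 = i.val by omega)
      (show (⟨0, by omega⟩ : Fin (2*k)) = i from Fin.ext (show (0:ℕ) = i.val by omega))
  rcases eq_or_ne i.val (2*k-1) with h1 | h1
  · exact hb (.inl ⟨2*k-2, by omega⟩) (.inr ⟨⟨2*k-1, by omega⟩, show 2*k-1 ≠ k by omega⟩) (by simp)
      (show i.val + 1 = 2*k-2 ∨ 2*k-2+1 = i.val by omega)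
      (show (⟨2*k-1, by omega⟩ : Fin (2*k)) = i from Fin.ext (show 2*k-1 = i.val by omega))
  · exact hb (.inl ⟨i.val - 1, by omega⟩) (.inl ⟨i.val + 1, by omega⟩)
      (fun h => by simp only [Sum.inl.injEq, Fin.mk.injEq] at h; omega)
      (show i.val + 1 = i.val - 1 ∨ i.val - 1 + 1 = i.val by omega)
      (show i.val + 1 = i.val + 1 ∨ i.val + 1 + 1 = i.val from Or.inl rfl)

lemma tk_three_le_inl (k : ℕ) (hk : 3 ≤ k) (i : Fin (2*k)) (h0 : 0 < i.val)
    (h1 : i.val < 2*k-1) (h2 : i.val ≠ k) :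
    3 ≤ ((Tk k).neighborSet (.inl i)).ncard := by
  have hi := i.isLt
  set a : TreeVert k := .inl ⟨i.val - 1, by omega⟩ with ha
  set b : TreeVert k := .inl ⟨i.val + 1, by omega⟩ with hbb
  set c : TreeVert k := .inr ⟨i, h2⟩ with hc
  have hsub : ({a, b, c} : Set (TreeVert k)) ⊆ (Tk k).neighborSet (.inl i) := by
    rintro x (rfl | rfl | rfl)
    · exact show i.val + 1 = i.val - 1 ∨ i.val - 1 + 1 = i.val by omega
    · exact show i.val + 1 = i.val + 1 ∨ i.val + 1 + 1 = i.val from Or.inl rfl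
    · exact show (i : Fin (2*k)) = i from rfl
  have hnm : a ∉ ({b, c} : Set (TreeVert k)) := by
    rintro (h | h)
    · rw [ha, hbb] at h; simp only [Sum.inl.injEq, Fin.mk.injEq] at h; omega
    · rw [ha, hc] at h; exact Sum.inl_ne_inr h
  have hbc : b ≠ c := by rw [hbb, hc]; exact fun h => Sum.inl_ne_inr h
  calc 3 = ({a, b, c} : Set (TreeVert k)).ncard := by
        rw [Set.ncard_insert_of_notMem hnm (Set.toFinite _), Set.ncard_pair hbc]
  _ ≤ _ := Set.ncard_le_ncard hsub (Set.toFinite _)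

lemma tk_nbhd_le_two (k : ℕ) (hk : 3 ≤ k) (i : Fin (2*k))
    (h : i.val = 0 ∨ i.val = k ∨ i.val = 2*k-1) :
    ((Tk k).neighborSet (.inl i)).ncard ≤ 2 := by
  have hi := i.isLt
  obtain ⟨a, b, hab⟩ : ∃ a b : TreeVert k, (Tk k).neighborSet (.inl i) ⊆ {a, b} := by
    rcases h with h | h | h
    · refine ⟨.inl ⟨1, by omega⟩, .inr ⟨⟨0, by omega⟩, show (0:ℕ) ≠ k by omega⟩, ?_⟩
      rintro (j | r) hx
      · rcases (hx : i.val + 1 = j.val ∨ j.val + 1 = i.val) with hj | hj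
        · exact Or.inl (congrArg Sum.inl (Fin.ext (show j.val = 1 by omega)))
        · exact absurd hj (by omega)
      · replace hx : r.1 = i := hx
        exact Or.inr (congrArg Sum.inr (Subtype.ext (Fin.ext
          (show r.1.val = 0 by rw [hx]; exact h))))
    · refine ⟨.inl ⟨k-1, by omega⟩, .inl ⟨k+1, by omega⟩, ?_⟩
      rintro (j | r) hx
      · rcases (hx : i.val + 1 = j.val ∨ j.val + 1 = i.val) with hj | hj
        · exact Or.inr (congrArg Sum.inl (Fin.ext (show j.val = k+1 by omega)))
        · exact Or.inl (congrArg Sum.inl (Fin.ext (show j.val = k-1 by omega)))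
      · replace hx : r.1 = i := hx
        exact absurd (show r.1.val = k by rw [hx, h]) r.2
    · refine ⟨.inl ⟨2*k-2, by omega⟩, .inr ⟨⟨2*k-1, by omega⟩, show 2*k-1 ≠ k by omega⟩, ?_⟩
      rintro (j | r) hx
      · rcases (hx : i.val + 1 = j.val ∨ j.val + 1 = i.val) with hj | hj
        · exact absurd hj (by omega)
        · exact Or.inl (congrArg Sum.inl (Fin.ext (show j.val = 2*k-2 by omega)))
      · replace hx : r.1 = i := hx
        exact Or.inr (congrArg Sum.inr (Subtype.ext (Fin.ext
          (show r.1.val = 2*k-1 by rw [hx]; exact h))))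
  calc ((Tk k).neighborSet (.inl i)).ncard ≤ ({a, b} : Set (TreeVert k)).ncard :=
        Set.ncard_le_ncard hab (Set.toFinite _)
  _ ≤ 2 := (Set.ncard_insert_le _ _).trans (by simp)

lemma mem_Fsub_inl {k : ℕ} {a : Fin (3*k+1)} {p : Fin (2*k)} :
    (Sum.inl p ∈ Fsub k a) ↔ (k ≤ a.val → (p.val = a.val - k - 1 ∨ p.val = a.val - k)) := Iff.rfl

lemma mem_Fsub_inr {k : ℕ} {a : Fin (3*k+1)} {q : {j : Fin (2 * k) // j.val ≠ k}} :
    (Sum.inr q ∈ Fsub k a) ↔ (if a.val < k then q.1.val = a.val ∨ q.1.val = 2*k-1-a.val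
      else (a.val - k ≤ k - 1 ∧ q.1.val = a.val - k) ∨
        (k + 2 ≤ a.val - k ∧ q.1.val = a.val - k - 1)) := Iff.rfl

lemma fsub_basemem (k : ℕ) (hk : 3 ≤ k) (c : Fin (3*k+1)) :
    (Sum.inl ⟨min (c.val - k) (2*k-1), by omega⟩ : TreeVert k) ∈ Fsub k c := by
  rw [mem_Fsub_inl]
  intro hc
  have := c.isLt
  show min (c.val - k) (2*k-1) = c.val - k - 1 ∨ min (c.val - k) (2*k-1) = c.val - k
  omega

lemma fsub_nonempty (k : ℕ) (hk : 3 ≤ k) (a : Fin (3*k+1)) : (Fsub k a).Nonempty :=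
  ⟨_, fsub_basemem k hk a⟩

lemma fsub_inter (k : ℕ) (hk : 3 ≤ k) (a b : Fin (3*k+1))
    (h : a.val < k ∨ b.val < k ∨ a.val + 1 = b.val ∨ b.val + 1 = a.val) :
    (Fsub k a ∩ Fsub k b).Nonempty := by
  have ha3 := a.isLt
  have hb3 := b.isLt
  have hvac : ∀ c : Fin (3*k+1), c.val < k → ∀ p : Fin (2*k), (Sum.inl p : TreeVert k) ∈ Fsub k c :=
    fun c hc p => mem_Fsub_inl.2 (fun h => absurd h (by omega))
  rcases Nat.lt_or_ge a.val k with ha | ha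
  · exact ⟨_, hvac a ha _, fsub_basemem k hk b⟩
  rcases Nat.lt_or_ge b.val k with hb | hb
  · exact ⟨_, fsub_basemem k hk a, hvac b hb _⟩
  rcases h with h | h | h | h
  · omega
  · omega
  · refine ⟨Sum.inl ⟨a.val - k, by omega⟩, mem_Fsub_inl.2 fun _ => Or.inr rfl,
      mem_Fsub_inl.2 fun _ => Or.inl (show a.val - k = b.val - k - 1 by omega)⟩
  · refine ⟨Sum.inl ⟨b.val - k, by omega⟩,
      mem_Fsub_inl.2 fun _ => Or.inl (show b.val - k = a.val - k - 1 by omega),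
      mem_Fsub_inl.2 fun _ => Or.inr rfl⟩

lemma fsub_inter_rev (k : ℕ) (hk : 3 ≤ k) (a b : Fin (3*k+1)) (hne : a ≠ b)
    (hx : (Fsub k a ∩ Fsub k b).Nonempty) :
    a.val < k ∨ b.val < k ∨ a.val + 1 = b.val ∨ b.val + 1 = a.val := by
  rcases Nat.lt_or_ge a.val k with ha | ha
  · exact Or.inl ha
  rcases Nat.lt_or_ge b.val k with hb | hb
  · exact Or.inr (Or.inl hb)
  obtain ⟨w, hwa, hwb⟩ := hx
  have hne' : a.val ≠ b.val := fun h => hne (Fin.ext h)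
  have ha3 := a.isLt
  have hb3 := b.isLt
  cases w with
  | inl p =>
    have h1 := mem_Fsub_inl.1 hwa ha
    have h2 := mem_Fsub_inl.1 hwb hb
    have := p.isLt
    omega
  | inr q =>
    rw [mem_Fsub_inr, if_neg (by omega)] at hwa hwb
    omega

lemma fsub_connected (k : ℕ) (hk : 3 ≤ k) (a : Fin (3*k+1)) :
    ((Tk k).induce (Fsub k a)).Connected := by
  have ha3 := a.isLt
  rcases Nat.lt_or_ge a.val k with ha | ha
  · -- clique vertex: all of the path is present
    have hinl : ∀ p : Fin (2*k), (Sum.inl p : TreeVert k) ∈ Fsub k a :=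
      fun p => mem_Fsub_inl.2 (fun h => absurd h (by omega))
    have key : ∀ n (hn : n < 2*k),
        ((Tk k).induce (Fsub k a)).Reachable ⟨.inl ⟨n, hn⟩, hinl _⟩ ⟨.inl ⟨0, by omega⟩, hinl _⟩ := by
      intro n
      induction n with
      | zero => intro hn; exact SimpleGraph.Reachable.refl _
      | succ m ih =>
        intro hn
        refine (SimpleGraph.Adj.reachable ?_).trans (ih (by omega))
        show (Tk k).Adj (.inl ⟨m+1, hn⟩) (.inl ⟨m, by omega⟩)
        exact Or.inr rfl
    have keyv : ∀ x : {w // w ∈ Fsub k a},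
        ((Tk k).induce (Fsub k a)).Reachable x ⟨.inl ⟨0, by omega⟩, hinl _⟩ := by
      rintro ⟨(p | q), hx⟩
      · exact key p.val p.isLt
      · refine (SimpleGraph.Adj.reachable ?_).trans (key q.1.val q.1.isLt)
        show (Tk k).Adj (.inr q) (.inl q.1)
        rfl
    have : Nonempty {w // w ∈ Fsub k a} := ⟨⟨.inl ⟨0, by omega⟩, hinl _⟩⟩
    exact ⟨fun x y => (keyv x).trans (keyv y).symm⟩
  · -- path vertex of Gk
    have hmin : min (a.val - k) (2*k-1) < 2*k := by omega
    set base : {w // w ∈ Fsub k a} :=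
      ⟨.inl ⟨min (a.val - k) (2*k-1), hmin⟩, fsub_basemem k hk a⟩ with hbase
    have reach_inl : ∀ (p : Fin (2*k)) (hp : (Sum.inl p : TreeVert k) ∈ Fsub k a),
        ((Tk k).induce (Fsub k a)).Reachable ⟨.inl p, hp⟩ base := by
      intro p hp
      have hp' := mem_Fsub_inl.1 hp ha
      have hplt := p.isLt
      rcases eq_or_ne p.val (min (a.val - k) (2*k-1)) with he | hne
      · rw [show (⟨.inl p, hp⟩ : {w // w ∈ Fsub k a}) = base from
          Subtype.ext (congrArg Sum.inl (Fin.ext he))]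
      · apply SimpleGraph.Adj.reachable
        show (Tk k).Adj (.inl p) (.inl ⟨min (a.val - k) (2*k-1), hmin⟩)
        show p.val + 1 = min (a.val - k) (2*k-1) ∨ min (a.val - k) (2*k-1) + 1 = p.val
        omega
    have keyv : ∀ x : {w // w ∈ Fsub k a}, ((Tk k).induce (Fsub k a)).Reachable x base := by
      rintro ⟨(p | q), hx⟩
      · exact reach_inl p hx
      · have hq := mem_Fsub_inr.1 hx
        rw [if_neg (by omega)] at hq
        rcases hq with ⟨h1, h2⟩ | ⟨h1, h2⟩
        · refine (SimpleGraph.Adj.reachable ?_).trans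
            (reach_inl ⟨a.val - k, by omega⟩ (mem_Fsub_inl.2 fun _ => Or.inr rfl))
          show (Tk k).Adj (.inr q) (.inl ⟨a.val - k, by omega⟩)
          show q.1 = ⟨a.val - k, by omega⟩
          exact Fin.ext h2
        · refine (SimpleGraph.Adj.reachable ?_).trans
            (reach_inl ⟨a.val - k - 1, by omega⟩
              (mem_Fsub_inl.2 fun _ => Or.inl rfl))
          show (Tk k).Adj (.inr q) (.inl ⟨a.val - k - 1, by omega⟩)
          show q.1 = ⟨a.val - k - 1, by omega⟩
          exact Fin.ext h2
    have : Nonempty {w // w ∈ Fsub k a} := ⟨base⟩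
    exact ⟨fun x y => (keyv x).trans (keyv y).symm⟩


lemma tk_leaf_count (k : ℕ) (hk : 3 ≤ k) :
    {v : TreeVert k | ((Tk k).neighborSet v).ncard = 1}.ncard = 2*k-1 := by
  have hset : {v : TreeVert k | ((Tk k).neighborSet v).ncard = 1} = Set.range Sum.inr := by
    ext w
    cases w with
    | inl i =>
      simp only [Set.mem_setOf_eq, Set.mem_range]
      constructor
      · intro h; have := tk_two_le_inl k hk i; omega
      · rintro ⟨q, h⟩; exact absurd h (by simp)
    | inr q =>
      simp only [Set.mem_setOf_eq, Set.mem_range]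
      exact ⟨fun _ => ⟨q, rfl⟩, fun _ => tk_leaf_inr k q⟩
  rw [hset, ← Nat.card_coe_set_eq, Nat.card_range_of_injective Sum.inr_injective,
    Nat.card_eq_fintype_card]
  have h2 : Fintype.card {j : Fin (2*k) // j.val = k} = 1 :=
    Fintype.card_eq_one_iff.2 ⟨⟨⟨k, by omega⟩, rfl⟩, fun y => Subtype.ext (Fin.ext y.2)⟩
  have h1 := Fintype.card_subtype_compl (fun j : Fin (2*k) => j.val = k)
  rw [h2, Fintype.card_fin] at h1
  exact (Fintype.card_congr (Equiv.subtypeEquivRight (fun j => Iff.rfl))).trans h1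

lemma tk_branch_count (k : ℕ) (hk : 3 ≤ k) :
    {v : TreeVert k | 3 ≤ ((Tk k).neighborSet v).ncard}.ncard = 2*k-3 := by
  have hset : {v : TreeVert k | 3 ≤ ((Tk k).neighborSet v).ncard}
      = Sum.inl '' {i : Fin (2*k) | 0 < i.val ∧ i.val < 2*k-1 ∧ i.val ≠ k} := by
    ext w
    cases w with
    | inl i =>
      simp only [Set.mem_setOf_eq, Set.mem_image]
      constructor
      · intro h3
        rcases Decidable.em (i.val = 0 ∨ i.val = k ∨ i.val = 2*k-1) with h | h
        · have := tk_nbhd_le_two k hk i h; omega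
        · push_neg at h
          exact ⟨i, ⟨by omega, by have := i.isLt; omega, h.2.1⟩, rfl⟩
      · rintro ⟨j, ⟨hj0, hj1, hj2⟩, hji⟩
        cases Sum.inl_injective hji
        exact tk_three_le_inl k hk _ hj0 hj1 hj2
    | inr q =>
      simp only [Set.mem_setOf_eq, Set.mem_image, tk_leaf_inr]
      constructor
      · intro h; omega
      · rintro ⟨j, _, hj⟩; exact absurd hj (by simp)
  rw [hset, Set.ncard_image_of_injective _ Sum.inl_injective]
  have h2 : {i : Fin (2*k) | 0 < i.val ∧ i.val < 2*k-1 ∧ i.val ≠ k}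
      = Set.univ \ {(⟨0, by omega⟩ : Fin (2*k)), ⟨k, by omega⟩, ⟨2*k-1, by omega⟩} := by
    ext i
    have := i.isLt
    simp [Fin.ext_iff]
    omega
  rw [h2, Set.ncard_diff (Set.subset_univ _) (Set.toFinite _), Set.ncard_univ,
    Nat.card_eq_fintype_card, Fintype.card_fin,
    Set.ncard_insert_of_notMem
      (by simp only [Set.mem_insert_iff, Set.mem_singleton_iff, Fin.mk.injEq]; omega)
      (Set.toFinite _),
    Set.ncard_pair (by simp only [ne_eq, Fin.mk.injEq]; omega)]


/-- stmt13: `G_k` is the intersection graph of a family of subtrees of the tree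
`T`, which has `2k-1` leaves and `2k-3` branch vertices. -/
theorem stmt13 (k : ℕ) (hk : 3 ≤ k) :
    (Tk k).IsTree ∧
    (∀ a, (Fsub k a).Nonempty ∧ ((Tk k).induce (Fsub k a)).Connected) ∧
    (∀ a b, (Gk k).Adj a b ↔ a ≠ b ∧ (Fsub k a ∩ Fsub k b).Nonempty) ∧
    {v | ((Tk k).neighborSet v).ncard = 1}.ncard = 2 * k - 1 ∧
    {v | 3 ≤ ((Tk k).neighborSet v).ncard}.ncard = 2 * k - 3 := by
  refine ⟨tk_isTree k (by omega), fun a => ⟨fsub_nonempty k hk a, fsub_connected k hk a⟩,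
    fun a b => ?_, tk_leaf_count k hk, tk_branch_count k hk⟩
  constructor
  · rintro ⟨hne, hd⟩
    exact ⟨hne, fsub_inter k hk a b hd⟩
  · rintro ⟨hne, hx⟩
    exact ⟨hne, fsub_inter_rev k hk a b hne hx⟩
end
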